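/- arXiv:1904.12377 — 2 statements merged into one kernel-verified Lean document; each statement's English description precedes it below -/
import Mathlib

section
/- Let G be an M-group, N a normal subgroup, θ an irreducible character of N, χ an irreducible constituent of θ^G, and H ≤ G with a linear character λ of H such that λ^G = χ. If N'' ∩ (tHt⁻¹) ⊆ tH't⁻¹ for all t ∈ G, then N'' is contained in the kernel of χ. -/
open scoped Classical

noncomputable section

/-- `χ : G → ℂ` is the character of some finite-dimensional complex representation of `G`. -/
def IsChar (G : Type) [Group G] (χ : G → ℂ) : Prop :=
  ∃ V : FDRep ℂ G, χ = V.character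

/-- `χ : G → ℂ` is the character of some irreducible (simple) complex representation of `G`. -/
def IsIrrChar (G : Type) [Group G] (χ : G → ℂ) : Prop :=
  ∃ V : FDRep ℂ G, CategoryTheory.Simple V ∧ χ = V.character

/-- The induced class function of `θ : H → ℂ` from a subgroup `H ≤ G` to `G`. -/
def indFn {G : Type} [Group G] [Fintype G] (H : Subgroup G) (θ : H → ℂ) : G → ℂ :=
  fun g => (Fintype.card H : ℂ)⁻¹ *
    ∑ x : G, if h : x⁻¹ * g * x ∈ H then θ ⟨x⁻¹ * g * x, h⟩ else 0

/-- A character of `G` is monomial if it is induced from a linear character of a subgroup. -/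
def IsMonomial (G : Type) [Group G] [Fintype G] (χ : G → ℂ) : Prop :=
  ∃ (H : Subgroup G) (θ : H → ℂ), IsChar H θ ∧ θ 1 = 1 ∧ indFn H θ = χ

/-- An irreducible character of `H` is primitive if it is not induced from a character
of any proper subgroup. -/
def IsPrimitiveChar (H : Type) [Group H] [Fintype H] (θ : H → ℂ) : Prop :=
  IsIrrChar H θ ∧ ∀ (K : Subgroup H) (ψ : K → ℂ), K ≠ ⊤ → IsChar K ψ → indFn K ψ ≠ θ

/-- An irreducible character of `G` is super-monomial if every primitive character of a
subgroup inducing it is linear. -/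
def IsSuperMonomial (G : Type) [Group G] [Fintype G] (χ : G → ℂ) : Prop :=
  IsIrrChar G χ ∧
    ∀ (H : Subgroup G) (θ : H → ℂ), IsPrimitiveChar H θ → indFn H θ = χ → θ 1 = 1

/-- The set of irreducible character degrees of `G`. -/
def charDegrees (G : Type) [Group G] [Fintype G] : Set ℕ :=
  {n | ∃ χ : G → ℂ, IsIrrChar G χ ∧ χ 1 = n}

/-- The set of monomial irreducible character degrees of `G`. -/
def monomialCharDegrees (G : Type) [Group G] [Fintype G] : Set ℕ :=
  {n | ∃ χ : G → ℂ, IsIrrChar G χ ∧ IsMonomial G χ ∧ χ 1 = n}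

/-- The standard inner product of class functions on `G`. -/
def charInner (G : Type) [Group G] [Fintype G] (φ ψ : G → ℂ) : ℂ :=
  (Fintype.card G : ℂ)⁻¹ * ∑ g : G, φ g * starRingEnd ℂ (ψ g)


section AuxStmt3

open scoped commutatorElement

lemma trace_comp_of_finrank_one {M : Type} [AddCommGroup M] [Module ℂ M] [Module.Finite ℂ M]
    (h : Module.finrank ℂ M = 1) (f g : M →ₗ[ℂ] M) :
    LinearMap.trace ℂ M (f ∘ₗ g) = LinearMap.trace ℂ M f * LinearMap.trace ℂ M g := by
  let b : Module.Basis (Fin 1) ℂ M := Module.finBasisOfFinrankEq ℂ M h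
  rw [LinearMap.trace_eq_matrix_trace ℂ b, LinearMap.trace_eq_matrix_trace ℂ b,
    LinearMap.trace_eq_matrix_trace ℂ b, LinearMap.toMatrix_comp b b b]
  simp [Matrix.trace, Matrix.mul_apply]

lemma isChar_mul {H : Type} [Group H] {lam : H → ℂ} (hlam : IsChar H lam) (hlin : lam 1 = 1) :
    ∀ a b : H, lam (a * b) = lam a * lam b := by
  obtain ⟨V, rfl⟩ := hlam
  have hfin : Module.finrank ℂ V = 1 := by
    have h1 := V.char_one
    rw [hlin] at h1
    exact_mod_cast h1.symm
  intro a b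
  show LinearMap.trace ℂ V (V.ρ (a * b)) = _
  rw [map_mul]
  exact trace_comp_of_finrank_one hfin (V.ρ a) (V.ρ b)

lemma isChar_comm {G : Type} [Group G] {H : Subgroup G} {lam : H → ℂ}
    (hlam : IsChar H lam) (hlin : lam 1 = 1) :
    ∀ (g : G) (hg : g ∈ H), g ∈ ⁅H, H⁆ → lam ⟨g, hg⟩ = 1 := by
  have hmul := isChar_mul hlam hlin
  have hinv : ∀ a : H, lam a * lam a⁻¹ = 1 := fun a => by
    rw [← hmul]; simp [hlin]
  let u : H →* ℂˣ :=
    { toFun := fun a => Units.mkOfMulEqOne (lam a) (lam a⁻¹) (hinv a)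
      map_one' := by ext; simpa using hlin
      map_mul' := fun a b => by ext; simpa using hmul a b }
  have hle : (⁅H, H⁆ : Subgroup G) ≤ Subgroup.map H.subtype u.ker := by
    rw [Subgroup.commutator_le]
    intro g₁ h₁ g₂ h₂
    refine ⟨⁅(⟨g₁, h₁⟩ : H), (⟨g₂, h₂⟩ : H)⁆, ?_, rfl⟩
    show u ⁅(⟨g₁, h₁⟩ : H), (⟨g₂, h₂⟩ : H)⁆ = 1
    rw [map_commutatorElement]
    exact commutatorElement_eq_one_iff_mul_comm.mpr (mul_comm _ _)
  intro g hg hg2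
  obtain ⟨a, ha, rfl⟩ := hle hg2
  have h1 : u a = 1 := ha
  have h2 : lam a = ((u a : ℂˣ) : ℂ) := rfl
  have h3 : (⟨(H.subtype a : G), hg⟩ : H) = a := by ext; rfl
  rw [h3, h2, h1, Units.val_one]

end AuxStmt3

/-- The Mackey computation in the proof of Theorem 1.2: if `N'' ∩ tHt⁻¹ ⊆ tH't⁻¹` for all
`t ∈ G`, then `N'' ⊆ Ker χ`. -/
theorem stmt_3 (G : Type) [Group G] [Fintype G]
    (hM : ∀ χ : G → ℂ, IsIrrChar G χ → IsMonomial G χ)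
    (N : Subgroup G) (hN : N.Normal) (θ : N → ℂ) (hθ : IsIrrChar N θ)
    (χ : G → ℂ) (hχ : IsIrrChar G χ)
    (hconst : charInner G (indFn N θ) χ ≠ 0)
    (H : Subgroup G) (lam : H → ℂ) (hlam : IsChar H lam) (hlin : lam 1 = 1)
    (hind : indFn H lam = χ)
    (hsub : ∀ t g : G, g ∈ ⁅⁅N, N⁆, ⁅N, N⁆⁆ →
      g ∈ Subgroup.map (MulAut.conj t).toMonoidHom H →
      g ∈ Subgroup.map (MulAut.conj t).toMonoidHom ⁅H, H⁆) :
    ∀ g ∈ ⁅⁅N, N⁆, ⁅N, N⁆⁆, χ g = χ 1 := by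
  intro g hg
  obtain ⟨V, hsV, hcV⟩ := hχ
  haveI := hN
  set K : Subgroup G := ⁅⁅N, N⁆, ⁅N, N⁆⁆ with hK
  haveI hKn : K.Normal := by rw [hK]; infer_instance
  -- lam is trivial on the relevant conjugates
  have hval : ∀ n : G, n ∈ K → ∀ x : G, ∀ hx : x⁻¹ * n * x ∈ H,
      lam ⟨x⁻¹ * n * x, hx⟩ = 1 := by
    intro n hn x hx
    have h1 : n ∈ Subgroup.map (MulAut.conj x).toMonoidHom H := by
      rw [Subgroup.mem_map_equiv]
      simpa using hx
    have h2 := hsub x n hn h1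
    rw [Subgroup.mem_map_equiv] at h2
    have h3 : x⁻¹ * n * x ∈ (⁅H, H⁆ : Subgroup G) := by simpa using h2
    exact isChar_comm hlam hlin _ hx h3
  -- the value of χ on elements of K is a (nonnegative) count
  have hcard : ∀ n : G, n ∈ K →
      χ n = (Fintype.card H : ℂ)⁻¹ *
        ((Finset.univ.filter fun x : G => x⁻¹ * n * x ∈ H).card : ℂ) := by
    intro n hn
    rw [← hind]
    show (Fintype.card H : ℂ)⁻¹ * _ = _
    congr 1
    rw [← Finset.sum_boole]
    refine Finset.sum_congr rfl fun x _ => ?_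
    by_cases h : x⁻¹ * n * x ∈ H
    · rw [dif_pos h, if_pos h, hval n hn x h]
    · rw [dif_neg h, if_neg h]
  -- the sum of χ over K is nonzero
  have hS : (∑ n : K, χ (n : G)) ≠ 0 := by
    have : (∑ n : K, χ (n : G)) = (Fintype.card H : ℂ)⁻¹ *
        ((∑ n : K, (Finset.univ.filter fun x : G => x⁻¹ * (n : G) * x ∈ H).card : ℕ) : ℂ) := by
      rw [Nat.cast_sum, Finset.mul_sum]
      exact Finset.sum_congr rfl fun n _ => hcard (n : G) n.2
    rw [this]
    have hM : 0 < ∑ n : K, (Finset.univ.filter fun x : G => x⁻¹ * (n : G) * x ∈ H).card := by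
      have h1 : (Finset.univ.filter fun x : G => x⁻¹ * ((1 : K) : G) * x ∈ H).card
          = Fintype.card G := by
        rw [Finset.filter_true_of_mem]
        · exact Finset.card_univ
        · intro x _; simpa using H.one_mem
      calc 0 < Fintype.card G := Fintype.card_pos
        _ = _ := h1.symm
        _ ≤ _ := Finset.single_le_sum (f := fun n : K =>
            (Finset.univ.filter fun x : G => x⁻¹ * (n : G) * x ∈ H).card)
            (fun _ _ => Nat.zero_le _) (Finset.mem_univ (1 : K))
    exact mul_ne_zero (inv_ne_zero (Nat.cast_ne_zero.mpr Fintype.card_ne_zero))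
      (Nat.cast_ne_zero.mpr hM.ne')
  -- the averaging endomorphism
  let T : V →ₗ[ℂ] V := ∑ n : K, V.ρ (n : G)
  have hT_fix : ∀ n : K, V.ρ (n : G) ∘ₗ T = T := by
    intro n
    show V.ρ (n : G) * T = T
    rw [Finset.mul_sum]
    calc ∑ m : K, V.ρ (n : G) * V.ρ (m : G)
        = ∑ m : K, V.ρ ((n * m : K) : G) := by
          refine Finset.sum_congr rfl fun m _ => ?_
          rw [← map_mul]; rfl
      _ = ∑ m : K, V.ρ (m : G) :=
          Fintype.sum_equiv (Equiv.mulLeft n) _ _ (fun m => rfl)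
  have hT_conj : ∀ x : G, V.ρ x ∘ₗ T = T ∘ₗ V.ρ x := by
    intro x
    show V.ρ x * T = T * V.ρ x
    rw [Finset.mul_sum, Finset.sum_mul]
    let e : K ≃ K :=
      { toFun := fun m => ⟨x * m * x⁻¹, hKn.conj_mem m.1 m.2 x⟩
        invFun := fun m => ⟨x⁻¹ * m * x, by simpa using hKn.conj_mem m.1 m.2 x⁻¹⟩
        left_inv := fun m => by ext; group
        right_inv := fun m => by ext; group }
    refine Fintype.sum_equiv e _ _ fun m => ?_
    show V.ρ x * V.ρ (m : G) = V.ρ ((x * m * x⁻¹ : G)) * V.ρ x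
    rw [← map_mul, ← map_mul]
    congr 1
    group
  -- T as a morphism of representations
  let f : V ⟶ V := ⟨FGModuleCat.ofHom T, fun x => by
    apply CategoryTheory.ObjectProperty.hom_ext; apply ModuleCat.hom_ext; exact (hT_conj x).symm⟩
  have hfhom : f.hom.hom.hom = T := rfl
  have htrT : LinearMap.trace ℂ V T = ∑ n : K, χ (n : G) := by
    rw [map_sum]
    exact Finset.sum_congr rfl fun n _ => by rw [hcV]; rfl
  have hf0 : f ≠ 0 := by
    intro h
    apply hS
    rw [← htrT, ← hfhom, h]
    show LinearMap.trace ℂ V (0 : V →ₗ[ℂ] V) = 0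
    simp
  haveI : CategoryTheory.Simple V := hsV
  haveI hiso : CategoryTheory.IsIso f := CategoryTheory.isIso_of_hom_simple hf0
  -- T squared
  have hTT : T ∘ₗ T = (Fintype.card K : ℂ) • T := by
    show T * T = _
    calc T * T = ∑ n : K, V.ρ (n : G) * T := by rw [Finset.sum_mul]
      _ = ∑ _n : K, T := Finset.sum_congr rfl fun n _ => hT_fix n
      _ = (Fintype.card K : ℂ) • T := by
        rw [Finset.sum_const, Finset.card_univ]
        rw [← Nat.cast_smul_eq_nsmul ℂ]
  -- use the inverse to conclude T = c • id
  let U : V →ₗ[ℂ] V := (CategoryTheory.inv f).hom.hom.hom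
  have hUT : U ∘ₗ T = LinearMap.id := by
    have := CategoryTheory.IsIso.hom_inv_id f
    have h2 := congrArg (fun φ : V ⟶ V => φ.hom.hom.hom) this
    exact h2
  have hTid : T = (Fintype.card K : ℂ) • LinearMap.id := by
    have h1 : U ∘ₗ (T ∘ₗ T) = T := by
      rw [← LinearMap.comp_assoc, hUT, LinearMap.id_comp]
    rw [hTT] at h1
    rw [← h1]
    rw [LinearMap.comp_smul, hUT]
  -- each ρ n is the identity
  have hcK : (Fintype.card K : ℂ) ≠ 0 := Nat.cast_ne_zero.mpr Fintype.card_ne_zero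
  have hρ : V.ρ g = LinearMap.id := by
    have h1 := hT_fix ⟨g, hg⟩
    rw [hTid] at h1
    have h2 : (Fintype.card K : ℂ) • (V.ρ g ∘ₗ LinearMap.id)
        = (Fintype.card K : ℂ) • (LinearMap.id : V →ₗ[ℂ] V) := by
      rw [← LinearMap.comp_smul]; exact h1
    have := smul_right_injective (V →ₗ[ℂ] V) hcK h2
    simpa using this
  rw [hcV]
  show LinearMap.trace ℂ V (V.ρ g) = LinearMap.trace ℂ V (V.ρ 1)
  rw [hρ, map_one]
  rfl
end
end

section
/- Let G be a finite group with a normal Sylow p-subgroup P such that P' ⊆ Ker(χ) for every irreducible character χ of G whose degree is not divisible by p, and suppose cd(G/P') = {1, n} where n = [G : I] for some subgroup I containing P. If G/P' = A × B with A abelian and B a q-group for some prime q, and G' is a p-group, then B is abelian (hence G/P' is abelian). -/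
open scoped Classical

noncomputable section

open scoped commutatorElement

/-- The case elimination in Lemma 3.2: with `P ⊴ G` a Sylow `p`-subgroup, `P' ⊆ Ker χ` for
every irreducible `χ` of degree prime to `p`, `cd(G/P') = {1, n}` with `n = [G : I]` and
`P ≤ I`, if `G/P' ≅ A × B` with `A` abelian and `B` a `q`-group, and `G'` is a `p`-group,
then `B` is abelian. -/
theorem stmt_18 (G : Type) [Group G] [Fintype G] (p q : ℕ) (hp : p.Prime) (hq : q.Prime)
    (P : Sylow p G) (hPn : (P : Subgroup G).Normal)
    [hP'n : (⁅P.toSubgroup, P.toSubgroup⁆ : Subgroup G).Normal]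
    [Fintype (G ⧸ (⁅P.toSubgroup, P.toSubgroup⁆ : Subgroup G))]
    (hker : ∀ χ : G → ℂ, IsIrrChar G χ → (∀ k : ℕ, χ 1 = k → ¬ p ∣ k) →
      ∀ g ∈ (⁅P.toSubgroup, P.toSubgroup⁆ : Subgroup G), χ g = χ 1)
    (n : ℕ) (I : Subgroup G) (hPI : P.toSubgroup ≤ I) (hn : n = I.index)
    (hcdq : charDegrees (G ⧸ (⁅P.toSubgroup, P.toSubgroup⁆ : Subgroup G)) = {1, n})
    (A B : Type) [CommGroup A] [Group B] (hB : IsPGroup q B)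
    (e : (G ⧸ (⁅P.toSubgroup, P.toSubgroup⁆ : Subgroup G)) ≃* A × B)
    (hG' : IsPGroup p (commutator G)) :
    ∀ x y : B, x * y = y * x := by
  set N : Subgroup G := ⁅P.toSubgroup, P.toSubgroup⁆ with hN
  set φ : G →* G ⧸ N := QuotientGroup.mk' N with hφ
  have hφs : Function.Surjective φ := QuotientGroup.mk'_surjective N
  have hNP : N ≤ P.toSubgroup := Subgroup.commutator_le_right _ _
  have hNpg : IsPGroup p N := P.isPGroup'.to_le hNP
  intro x y
  rw [← commutatorElement_eq_one_iff_mul_comm (g₁ := x)]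
  set z : B := ⁅x, y⁆ with hz
  -- the key element of G ⧸ N
  set a : G ⧸ N := e.symm (1, x) with ha
  set b : G ⧸ N := e.symm (1, y) with hb
  have hc : e.symm (1, z) = ⁅a, b⁆ := by
    rw [ha, hb, ← map_commutatorElement]
    congr 1
    simp [hz, commutatorElement_def, Prod.ext_iff, mul_comm]
  by_cases hpq : p = q
  · -- p = q : a and b lie in the image of P, whose image is abelian
    subst hpq
    haveI : Fact p.Prime := ⟨hp⟩
    haveI := Sylow.unique_of_normal P hPn
    have key : ∀ w : B, (e.symm (1, w)) ∈ P.toSubgroup.map φ := by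
      intro w
      set c : G ⧸ N := e.symm (1, w)
      have hcpow : ∀ k : ℕ, w ^ p ^ k = 1 → c ^ p ^ k = 1 := by
        intro k hk
        have : ((1 : A), w) ^ p ^ k = 1 := by
          rw [Prod.pow_mk, hk, one_pow]; rfl
        calc c ^ p ^ k = e.symm (((1 : A), w) ^ p ^ k) := by rw [map_pow]
        _ = 1 := by rw [this, map_one]
      obtain ⟨k, hk⟩ := hB w
      have hzp : IsPGroup p (Subgroup.zpowers c) := by
        rintro ⟨g, hg⟩
        obtain ⟨i, hi⟩ := Subgroup.mem_zpowers_iff.mp hg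
        refine ⟨k, ?_⟩
        ext
        show g ^ p ^ k = 1
        rw [← hi, ← zpow_natCast, ← zpow_mul, mul_comm, zpow_mul, zpow_natCast,
          hcpow k hk, one_zpow]
      have hQ : IsPGroup p ((Subgroup.zpowers c).comap φ) := by
        apply hzp.comap_of_ker_isPGroup
        rwa [hφ, QuotientGroup.ker_mk']
      obtain ⟨S, hS⟩ := hQ.exists_le_sylow
      have hSP : S = P := Subsingleton.elim S P
      obtain ⟨g, hg⟩ := hφs c
      have hgQ : g ∈ (Subgroup.zpowers c).comap φ := by
        simp [Subgroup.mem_comap, hg, Subgroup.mem_zpowers]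
      have hgP : g ∈ P.toSubgroup := by
        have := hS hgQ; rwa [hSP] at this
      exact ⟨g, hgP, hg⟩
    obtain ⟨u, hu, hua⟩ := key x
    obtain ⟨v, hv, hvb⟩ := key y
    have huv : ⁅u, v⁆ ∈ N := Subgroup.commutator_mem_commutator hu hv
    have : ⁅a, b⁆ = 1 := by
      rw [ha, hb, ← hua, ← hvb, ← map_commutatorElement]
      exact (QuotientGroup.eq_one_iff _).mpr huv
    have h1 : e.symm (1, z) = e.symm 1 := by rw [hc, this, map_one]
    have := e.symm.injective h1
    rw [Prod.ext_iff] at this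
    exact this.2
  · -- p ≠ q : z has both p-power and q-power order
    have hcomm : IsPGroup p (commutator (G ⧸ N)) := by
      have : commutator (G ⧸ N) = (commutator G).map φ := by
        rw [commutator_def, commutator_def, Subgroup.map_commutator,
          Subgroup.map_top_of_surjective φ hφs]
      rw [this]
      exact hG'.map φ
    have hcmem : ⁅a, b⁆ ∈ commutator (G ⧸ N) :=
      Subgroup.commutator_mem_commutator (Subgroup.mem_top a) (Subgroup.mem_top b)
    obtain ⟨k, hk⟩ := hcomm ⟨⁅a, b⁆, hcmem⟩
    have hk' : ⁅a, b⁆ ^ p ^ k = 1 := by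
      rw [Subtype.ext_iff] at hk
      simpa using hk
    have hzp : z ^ p ^ k = 1 := by
      have : e.symm ((1, z) ^ p ^ k) = e.symm 1 := by
        rw [map_pow, hc, hk', map_one]
      have := e.symm.injective this
      rw [Prod.pow_mk, Prod.ext_iff] at this
      exact this.2
    obtain ⟨m, hm⟩ := hB z
    have h1 : orderOf z ∣ p ^ k := orderOf_dvd_of_pow_eq_one hzp
    have h2 : orderOf z ∣ q ^ m := orderOf_dvd_of_pow_eq_one hm
    have hco : Nat.Coprime (p ^ k) (q ^ m) :=
      ((Nat.coprime_primes hp hq).mpr hpq).pow k m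
    have hd : orderOf z ∣ Nat.gcd (p ^ k) (q ^ m) := Nat.dvd_gcd h1 h2
    rw [Nat.Coprime] at hco
    rw [hco] at hd
    exact orderOf_eq_one_iff.mp (Nat.dvd_one.mp hd)
end
end
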